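/- Let κ be infinite, S the lattice of balanced triples (A,B,C) ∈ F(κ)³ with C \ m(A,B,C) finite, and B = {(A, A∩C, C) : A,C ∈ F(κ), A Δ C finite}. Suppose (A,B,C) ∈ S \ B with B ⊆ A, and (A',B',C') ∈ S is a complement of (A,B,C) in S (meet is (∅,∅,∅), join is (κ,κ,κ)). Then B' ⊄ A'. -/
import Mathlib


open Set

/-- `m(X,Y,Z) = (X∩Y) ∪ (X∩Z) ∪ (Y∩Z)`. -/
def mSet {κ : Type*} (X Y Z : Set κ) : Set κ := (X ∩ Y) ∪ (X ∩ Z) ∪ (Y ∩ Z)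

/-- The finite/cofinite algebra on `κ`. -/
def FinCofin (κ : Type*) : Set (Set κ) := {X | X.Finite ∨ Xᶜ.Finite}

/-- A triple of sets is balanced if its pairwise intersections coincide. -/
def BalancedT {κ : Type*} (t : Set κ × Set κ × Set κ) : Prop :=
  t.1 ∩ t.2.1 = t.1 ∩ t.2.2 ∧ t.1 ∩ t.2.2 = t.2.1 ∩ t.2.2

/-- The set `T` of triples from `F(κ)³` with `C \ m(A,B,C)` finite. -/
def Tset (κ : Type*) : Set (Set κ × Set κ × Set κ) :=
  {t | t.1 ∈ FinCofin κ ∧ t.2.1 ∈ FinCofin κ ∧ t.2.2 ∈ FinCofin κ ∧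
    (t.2.2 \ mSet t.1 t.2.1 t.2.2).Finite}

/-- The lattice `S` of balanced triples in `T`. -/
def Sset (κ : Type*) : Set (Set κ × Set κ × Set κ) :=
  {t | BalancedT t ∧ t ∈ Tset κ}

/-- Componentwise meet (intersection) of triples. -/
def meetT {κ : Type*} (t u : Set κ × Set κ × Set κ) : Set κ × Set κ × Set κ :=
  (t.1 ∩ u.1, t.2.1 ∩ u.2.1, t.2.2 ∩ u.2.2)

/-- The balanced closure of a triple of sets. -/
def clT {κ : Type*} (t : Set κ × Set κ × Set κ) : Set κ × Set κ × Set κ :=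
  (t.1 ∪ (t.2.1 ∩ t.2.2), t.2.1 ∪ (t.1 ∩ t.2.2), t.2.2 ∪ (t.1 ∩ t.2.1))

/-- Join of balanced triples: balanced closure of the componentwise union. -/
def joinT {κ : Type*} (t u : Set κ × Set κ × Set κ) : Set κ × Set κ × Set κ :=
  clT (t.1 ∪ u.1, t.2.1 ∪ u.2.1, t.2.2 ∪ u.2.2)

/-- The Banaschewski map `f(A,B,C) = (κ\A, κ\(B∪C), κ\(A∪B∪C))`. -/
def fT {κ : Type*} (t : Set κ × Set κ × Set κ) : Set κ × Set κ × Set κ :=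
  (t.1ᶜ, (t.2.1 ∪ t.2.2)ᶜ, (t.1 ∪ t.2.1 ∪ t.2.2)ᶜ)

/-- The map `g(A,C) = (A, A∩C, C)`. -/
def gT {κ : Type*} (p : Set κ × Set κ) : Set κ × Set κ × Set κ :=
  (p.1, p.1 ∩ p.2, p.2)

/-- The maximal Boolean sublattice `B = g(A)`. -/
def Bset (κ : Type*) : Set (Set κ × Set κ × Set κ) :=
  {t | ∃ A C : Set κ, A ∈ FinCofin κ ∧ C ∈ FinCofin κ ∧ (symmDiff A C).Finite ∧
    t = (A, A ∩ C, C)}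


theorem stmt15 {κ : Type*} [Infinite κ] (A B C A' B' C' : Set κ)
    (h : (A, B, C) ∈ Sset κ) (hnB : (A, B, C) ∉ Bset κ) (hBA : B ⊆ A)
    (h' : (A', B', C') ∈ Sset κ)
    (hmeet : meetT (A, B, C) (A', B', C') = ((∅, ∅, ∅) : Set κ × Set κ × Set κ))
    (hjoin : joinT (A, B, C) (A', B', C') = ((univ, univ, univ) : Set κ × Set κ × Set κ)) :
    ¬ B' ⊆ A' := by
  intro hsub
  obtain ⟨⟨hb1, hb2⟩, hAf, hBf, hCf, hTf⟩ := h
  obtain ⟨⟨hb1', hb2'⟩, hAf', hBf', hCf', hTf'⟩ := h'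
  simp only at hb1 hb2 hb1' hb2' hTf hTf' hAf hBf hCf hAf' hBf' hCf'
  -- B = A ∩ C
  have hB : B = A ∩ C := by
    rw [← hb1, inter_eq_right.mpr hBA]
  have hB' : B' = A' ∩ C' := by
    rw [← hb1', inter_eq_right.mpr hsub]
  -- C \ A finite
  have hmsub : mSet A B C ⊆ A := by
    rw [hB]; intro x hx
    rcases hx with (hx | hx) | hx
    · exact hx.1
    · exact hx.1
    · exact hx.1.1
  have hCA : (C \ A).Finite :=
    hTf.subset (fun x hx => ⟨hx.1, fun hm => hx.2 (hmsub hm)⟩)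
  have hmsub' : mSet A' B' C' ⊆ A' := by
    rw [hB']; intro x hx
    rcases hx with (hx | hx) | hx
    · exact hx.1
    · exact hx.1
    · exact hx.1.1
  have hCA' : (C' \ A').Finite :=
    hTf'.subset (fun x hx => ⟨hx.1, fun hm => hx.2 (hmsub' hm)⟩)
  -- A Δ C infinite
  have hsd : ¬ (symmDiff A C).Finite := fun hf =>
    hnB ⟨A, C, hAf, hCf, hf, by rw [hB]⟩
  have hAC : ¬ (A \ C).Finite := fun hf => hsd (by
    rw [Set.symmDiff_def]; exact hf.union hCA)
  -- A cofinite
  have hAc : Aᶜ.Finite := by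
    rcases hAf with hfin | hc
    · exact absurd (hfin.subset (diff_subset)) hAC
    · exact hc
  -- meet components
  have hm1 : A ∩ A' = ∅ := congrArg Prod.fst hmeet
  -- A' finite
  have hA'f : A'.Finite := hAc.subset (fun x hx => by
    intro hxA
    exact absurd hm1 (by simp [Set.eq_empty_iff_forall_notMem]; exact ⟨x, hxA, hx⟩))
  have hC'f : C'.Finite := by
    have : C' ⊆ (C' \ A') ∪ A' := fun x hx => by
      by_cases hxA : x ∈ A'
      · exact Or.inr hxA
      · exact Or.inl ⟨hx, hxA⟩
    exact (hCA'.union hA'f).subset this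
  have hB'f : B'.Finite := hA'f.subset hsub
  -- find x ∈ A \ C, x ∉ B' ∪ C'
  have hinf : ¬ ((A \ C) \ (B' ∪ C')).Finite := fun hf => hAC ((hf.union (hB'f.union hC'f)).subset (fun x hx => by
    by_cases hx2 : x ∈ B' ∪ C'
    · exact Or.inr hx2
    · exact Or.inl ⟨hx, hx2⟩))
  obtain ⟨x, hxAC, hxBC'⟩ := Set.Infinite.nonempty (fun hf => hinf hf)
  -- join second component
  have hj2 : (B ∪ B') ∪ ((A ∪ A') ∩ (C ∪ C')) = univ := by
    have := congrArg (fun t => t.2.1) hjoin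
    simpa [joinT, clT] using this
  have hx : x ∈ (B ∪ B') ∪ ((A ∪ A') ∩ (C ∪ C')) := hj2 ▸ mem_univ x
  rcases hx with (hx | hx) | hx
  · exact hxAC.2 (hB ▸ hx).2
  · exact hxBC' (Or.inl hx)
  · rcases hx.2 with hx | hx
    · exact hxAC.2 hx
    · exact hxBC' (Or.inr hx)
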